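/- Let n = 2m. For every admissible set S, the partial derivative of IMM_{n,n} with respect to the m variables of S is a single multilinear monomial m_S of degree m (with coefficient 1) containing exactly one variable from each of the even-indexed matrices X^{(2)}, X^{(4)}, …, X^{(2m)}. Moreover, the map S ↦ m_S is injective on admissible sets, and the number of admissible sets equals n^{2m−1} = n^{n−1}. -/

import Mathlib

open MvPolynomial Finsupp

noncomputable section

/-- The iterated matrix multiplication polynomial `IMM_{n,n}`: the `(1,1)` entry
(`0`-based indices) of the product of `n` generic `n × n` matrices; the variable
`(k, i, j) : Fin n × Fin n × Fin n` is the `(i,j)` entry of the `(k+1)`-st matrix. -/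
def IMM (n : ℕ) (K : Type*) [CommSemiring K] : MvPolynomial (Fin n × Fin n × Fin n) K :=
  if h : 0 < n then
    (((List.finRange n).map fun k =>
      Matrix.of fun i j => (X (k, i, j) : MvPolynomial (Fin n × Fin n × Fin n) K)).prod)
      ⟨0, h⟩ ⟨0, h⟩
  else 0

/-- Iterated partial derivative with respect to a finite set of variables. -/
def pderivFinset {σ : Type*} {K : Type*} [CommSemiring K] (D : Finset σ)
    (f : MvPolynomial σ K) : MvPolynomial σ K :=
  D.toList.foldr (fun v g => pderiv v g) f

/-- A set `S` of variables of `IMM_{n,n}` is admissible if it consists of exactly one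
variable from the first row of the first matrix and exactly one variable from each of
the other odd-indexed (`1`-based) matrices `X^(3), X^(5), …`; in `0`-based indexing these
are the matrices with even index `k`. -/
def IsAdmissible (n : ℕ) (S : Finset (Fin n × Fin n × Fin n)) : Prop :=
  (∀ v ∈ S, Even v.1.val) ∧
  (∀ k : Fin n, Even k.val → (S.filter fun v => v.1 = k).card = 1) ∧
  (∀ v ∈ S, v.1.val = 0 → v.2.1.val = 0)

set_option linter.unusedSectionVars false
set_option linter.unusedVariables false

section MainDefs

variable (n : ℕ) [NeZero n]

def edgeF (p : Fin n → Fin n) (k : Fin n) : Fin n × Fin n × Fin n :=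
  (k, (Fin.cons 0 p : Fin (n+1) → Fin n) k.castSucc, (Fin.cons 0 p : Fin (n+1) → Fin n) k.succ)

lemma edgeF_injective (p : Fin n → Fin n) : Function.Injective (edgeF n p) :=
  fun _ _ h => congrArg Prod.fst h

def pathD (p : Fin n → Fin n) : (Fin n × Fin n × Fin n) →₀ ℕ :=
  ∑ k : Fin n, Finsupp.single (edgeF n p k) 1

def lastIdx : Fin n :=
  ⟨n - 1, by have := Nat.pos_of_ne_zero (NeZero.ne n); omega⟩

def evens : Finset (Fin n) := Finset.univ.filter (fun k => Even k.val)
def odds : Finset (Fin n) := Finset.univ.filter (fun k => Odd k.val)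

end MainDefs

lemma prodX_eq_monomial {σ : Type*} {K : Type*} [CommSemiring K] (V : Finset σ) :
    (∏ v ∈ V, (X v : MvPolynomial σ K)) = monomial (∑ v ∈ V, Finsupp.single v 1) 1 := by
  classical
  induction V using Finset.induction with
  | empty => simp
  | insert _ _ h ih =>
      rw [Finset.prod_insert h, Finset.sum_insert h, ih, X, monomial_mul, one_mul]

lemma sum_single_apply' {σ ι : Type*} [DecidableEq σ] [DecidableEq ι] (t : Finset ι) (f : ι → σ)
    (hf : Function.Injective f) (v : σ) :
    (∑ k ∈ t, Finsupp.single (f k) (1:ℕ)) v = if v ∈ t.image f then 1 else 0 := by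
  rw [Finsupp.finset_sum_apply]
  by_cases h : v ∈ t.image f
  · obtain ⟨k₀, hk₀, rfl⟩ := Finset.mem_image.mp h
    rw [Finset.sum_eq_single_of_mem k₀ hk₀, if_pos h, Finsupp.single_apply, if_pos rfl]
    intro b _ hb
    rw [Finsupp.single_apply, if_neg (fun he => hb (hf he))]
  · rw [if_neg h, Finset.sum_eq_zero]
    intro b hb
    rw [Finsupp.single_apply, if_neg]
    intro he
    exact h (Finset.mem_image.mpr ⟨b, hb, he⟩)

lemma sum_single_support {σ ι : Type*} [DecidableEq σ] [DecidableEq ι] (t : Finset ι) (f : ι → σ)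
    (hf : Function.Injective f) :
    (∑ k ∈ t, Finsupp.single (f k) (1:ℕ)).support = t.image f := by
  ext v
  rw [Finsupp.mem_support_iff, sum_single_apply' t f hf]
  by_cases h : v ∈ t.image f <;> simp [h]

lemma pderivList_monomial {σ : Type*} [DecidableEq σ] {K : Type*} [CommSemiring K]
    (l : List σ) (hl : l.Nodup) (d : σ →₀ ℕ) (hd : ∀ v, d v ≤ 1) :
    l.foldr (fun v g => pderiv v g) (monomial d (1:K)) =
      if l.toFinset ⊆ d.support then monomial (d - ∑ v ∈ l.toFinset, Finsupp.single v 1) 1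
      else 0 := by
  induction l with
  | nil => simp
  | cons a t ih =>
      have hnd := List.nodup_cons.mp hl
      rw [List.foldr_cons, ih hnd.2]
      have ht0 : (∑ v ∈ t.toFinset, Finsupp.single v (1:ℕ)) a = 0 := by
        have := sum_single_apply' t.toFinset id Function.injective_id a
        simp only [id_eq] at this
        rw [this, if_neg]
        simpa using hnd.1
      by_cases ht : t.toFinset ⊆ d.support
      · rw [if_pos ht, pderiv_monomial]
        have hda : ((d - ∑ v ∈ t.toFinset, Finsupp.single v 1 : σ →₀ ℕ)) a = d a := by
          rw [Finsupp.tsub_apply, ht0, Nat.sub_zero]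
        by_cases ha : a ∈ d.support
        · have h1 : d a = 1 := le_antisymm (hd a) (Nat.one_le_iff_ne_zero.mpr
            (Finsupp.mem_support_iff.mp ha))
          rw [if_pos]
          · congr 1
            · rw [tsub_tsub]
              congr 1
              rw [List.toFinset_cons, Finset.sum_insert (by simpa using hnd.1), add_comm]
            · rw [hda, h1]; simp
          · rw [List.toFinset_cons, Finset.insert_subset_iff]
            exact ⟨ha, ht⟩
        · have h0 : d a = 0 := Finsupp.notMem_support_iff.mp ha
          rw [hda, h0, if_neg]
          · simp
          · rw [List.toFinset_cons, Finset.insert_subset_iff]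
            exact fun hc => ha hc.1
      · rw [if_neg ht, map_zero, if_neg]
        intro hsub
        exact ht (fun x hx => hsub (by simp [List.mem_toFinset.mp hx]))

lemma pderivList_sum {σ ι : Type*} {K : Type*} [CommSemiring K] (l : List σ)
    (t : Finset ι) (f : ι → MvPolynomial σ K) :
    l.foldr (fun v g => pderiv v g) (∑ i ∈ t, f i)
      = ∑ i ∈ t, l.foldr (fun v g => pderiv v g) (f i) := by
  induction l with
  | nil => simp
  | cons a r ih => rw [List.foldr_cons, ih, map_sum]; rfl

lemma ofFn_prod_entry {R : Type*} [CommSemiring R] {N : ℕ} :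
    ∀ (ℓ : ℕ) (M : Fin ℓ → Matrix (Fin N) (Fin N) R) (i j : Fin N),
    (List.ofFn M).prod i j =
      ∑ p : Fin ℓ → Fin N, if (Fin.cons i p : Fin (ℓ+1) → Fin N) (Fin.last ℓ) = j
        then ∏ k : Fin ℓ, M k ((Fin.cons i p : Fin (ℓ+1) → Fin N) k.castSucc)
          ((Fin.cons i p : Fin (ℓ+1) → Fin N) k.succ) else 0 := by
  intro ℓ
  induction ℓ with
  | zero =>
      intro M i j
      simp [List.ofFn_zero, Matrix.one_apply, Fin.last]
  | succ ℓ ih =>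
      intro M i j
      rw [List.ofFn_succ, List.prod_cons, Matrix.mul_apply]
      rw [← Equiv.sum_comp (Fin.consEquiv (fun _ : Fin (ℓ+1) => Fin N))
        (fun p => if (Fin.cons i p : Fin (ℓ+2) → Fin N) (Fin.last (ℓ+1)) = j
          then ∏ k : Fin (ℓ+1), M k ((Fin.cons i p : Fin (ℓ+2) → Fin N) k.castSucc)
            ((Fin.cons i p : Fin (ℓ+2) → Fin N) k.succ) else 0)]
      rw [Fintype.sum_prod_type]
      refine Finset.sum_congr rfl (fun a _ => ?_)
      rw [ih (fun k => M k.succ) a j, Finset.mul_sum]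
      refine Finset.sum_congr rfl (fun q _ => ?_)
      have he : (Fin.consEquiv (fun _ : Fin (ℓ+1) => Fin N)) (a, q) = Fin.cons a q := rfl
      rw [he]
      have hlast : (Fin.cons i (Fin.cons a q) : Fin (ℓ+2) → Fin N) (Fin.last (ℓ+1))
          = (Fin.cons a q : Fin (ℓ+1) → Fin N) (Fin.last ℓ) := by
        have h1 : (Fin.last (ℓ+1)) = Fin.succ (Fin.last ℓ) := rfl
        rw [h1, Fin.cons_succ]
      rw [mul_ite, mul_zero, hlast]
      congr 1
      have hz : (Fin.cons i (Fin.cons a q) : Fin (ℓ+2) → Fin N) ((0:Fin (ℓ+1)).castSucc) = i := rfl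
      have ho : (Fin.cons i (Fin.cons a q) : Fin (ℓ+2) → Fin N) ((0:Fin (ℓ+1)).succ) = a := by
        rw [show ((0:Fin (ℓ+1)).succ) = Fin.succ (0:Fin (ℓ+1)) from rfl, Fin.cons_succ,
          Fin.cons_zero]
      rw [Fin.prod_univ_succ, hz, ho]
      congr 1

section MainLemmas

variable {n : ℕ} [NeZero n]

lemma pathD_apply (p : Fin n → Fin n) (v) :
    pathD n p v = if v ∈ Finset.univ.image (edgeF n p) then 1 else 0 :=
  sum_single_apply' _ _ (edgeF_injective n p) v

lemma pathD_le (p : Fin n → Fin n) (v) : pathD n p v ≤ 1 := by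
  rw [pathD_apply]; split <;> omega

lemma pathD_support (p : Fin n → Fin n) :
    (pathD n p).support = Finset.univ.image (edgeF n p) :=
  sum_single_support _ _ (edgeF_injective n p)

lemma cons_mk (p : Fin n → Fin n) (t : ℕ) (h : t < n) (h' : t + 1 < n + 1) :
    (Fin.cons (0:Fin n) p : Fin (n+1) → Fin n) ⟨t+1, h'⟩ = p ⟨t, h⟩ := by
  have he : (⟨t+1, h'⟩ : Fin (n+1)) = Fin.succ ⟨t, h⟩ := rfl
  rw [he, Fin.cons_succ]

lemma edgeF_fst (p : Fin n → Fin n) (k : Fin n) : (edgeF n p k).1 = k := rfl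

lemma edgeF_row (p : Fin n → Fin n) (kv : ℕ) (h1 : kv < n) (h0 : 0 < kv) :
    (edgeF n p ⟨kv, h1⟩).2.1 = p ⟨kv - 1, by omega⟩ := by
  show (Fin.cons 0 p : Fin (n+1) → Fin n) (Fin.castSucc ⟨kv, h1⟩) = _
  have he : Fin.castSucc (⟨kv, h1⟩ : Fin n) = (⟨(kv-1)+1, by omega⟩ : Fin (n+1)) := by
    apply Fin.ext; simp; omega
  rw [he, cons_mk p (kv-1) (by omega)]

lemma edgeF_row0 (p : Fin n → Fin n) (h1 : 0 < n) : (edgeF n p ⟨0, h1⟩).2.1 = 0 := by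
  show (Fin.cons 0 p : Fin (n+1) → Fin n) (Fin.castSucc ⟨0, h1⟩) = 0
  have he : Fin.castSucc (⟨0, h1⟩ : Fin n) = 0 := by apply Fin.ext; simp
  rw [he, Fin.cons_zero]

lemma edgeF_col (p : Fin n → Fin n) (kv : ℕ) (h1 : kv < n) :
    (edgeF n p ⟨kv, h1⟩).2.2 = p ⟨kv, h1⟩ := by
  show (Fin.cons 0 p : Fin (n+1) → Fin n) (Fin.succ ⟨kv, h1⟩) = _
  rw [Fin.cons_succ]

lemma card_odds {m : ℕ} (hn : n = 2*m) : (odds n).card = m := by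
  classical
  have hinj : Function.Injective (fun t : Fin m => (⟨2*t.val+1, by have := t.isLt; omega⟩ : Fin n)) := by
    intro a b hab
    have h2 : (2*a.val+1 : ℕ) = 2*b.val+1 := congrArg Fin.val hab
    exact Fin.ext (by omega)
  have he : odds n = Finset.image (fun t : Fin m => (⟨2*t.val+1, by have := t.isLt; omega⟩ : Fin n))
      Finset.univ := by
    ext v
    simp only [odds, Finset.mem_filter, Finset.mem_univ, true_and, Finset.mem_image]
    constructor
    · intro hv
      rw [Nat.odd_iff] at hv
      have hlt := v.isLt
      refine ⟨⟨v.val / 2, by omega⟩, ?_⟩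
      apply Fin.ext
      show 2*(v.val/2)+1 = v.val
      omega
    · rintro ⟨t, rfl⟩
      rw [Nat.odd_iff]
      show (2*t.val+1) % 2 = 1
      omega
  rw [he, Finset.card_image_of_injective _ hinj, Finset.card_univ, Fintype.card_fin]

lemma filter_image_edge (p : Fin n → Fin n) (t : Finset (Fin n)) (k : Fin n) (hk : k ∈ t) :
    ((t.image (edgeF n p)).filter fun v => v.1 = k) = {edgeF n p k} := by
  ext v
  simp only [Finset.mem_filter, Finset.mem_image, Finset.mem_singleton]
  constructor
  · rintro ⟨⟨k', hk', rfl⟩, h2⟩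
    rw [edgeF_fst] at h2
    rw [h2]
  · rintro rfl
    exact ⟨⟨k, hk, rfl⟩, rfl⟩

end MainLemmas

section Expand

variable {n : ℕ} [NeZero n]

lemma prodX_comp {σ ι K : Type*} [CommSemiring K] [DecidableEq σ] [DecidableEq ι]
    (t : Finset ι) (f : ι → σ) (hf : Function.Injective f) :
    (∏ k ∈ t, (X (f k) : MvPolynomial σ K)) = monomial (∑ k ∈ t, Finsupp.single (f k) 1) 1 := by
  rw [← Finset.prod_image (fun a _ b _ h => hf h), prodX_eq_monomial,
    Finset.sum_image (fun a _ b _ h => hf h)]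

lemma IMM_eq (K : Type*) [CommSemiring K] :
    IMM n K = ∑ p : Fin n → Fin n,
      if p (lastIdx n) = 0 then monomial (pathD n p) (1:K) else 0 := by
  classical
  have h0 : 0 < n := Nat.pos_of_ne_zero (NeZero.ne n)
  rw [IMM, dif_pos h0, ← List.ofFn_eq_map, ofFn_prod_entry]
  refine Finset.sum_congr rfl (fun p _ => ?_)
  have hz : (⟨0, h0⟩ : Fin n) = 0 := Fin.ext (by simp)
  rw [hz]
  have hlast : (Fin.cons (0:Fin n) p : Fin (n+1) → Fin n) (Fin.last n) = p (lastIdx n) := by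
    have he : (Fin.last n) = Fin.succ (lastIdx n) := by
      apply Fin.ext
      show n = (n-1) + 1
      omega
    rw [he, Fin.cons_succ]
  rw [hlast]
  congr 1
  have : ∀ k : Fin n, (Matrix.of fun i j => (X (k,i,j) : MvPolynomial (Fin n × Fin n × Fin n) K))
      ((Fin.cons 0 p : Fin (n+1) → Fin n) k.castSucc) ((Fin.cons 0 p : Fin (n+1) → Fin n) k.succ)
      = X (edgeF n p k) := fun k => rfl
  rw [Finset.prod_congr rfl (fun k _ => this k), pathD,
    prodX_comp _ _ (edgeF_injective n p)]

end Expand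

section Admissible

variable {n : ℕ} [NeZero n]

noncomputable def selF (S : Finset (Fin n × Fin n × Fin n)) (k : Fin n) :
    Fin n × Fin n × Fin n :=
  if h : ∃ v ∈ S, v.1 = k then h.choose else (k, 0, 0)

lemma selF_spec {S : Finset (Fin n × Fin n × Fin n)} {k : Fin n}
    (h : ∃ v ∈ S, v.1 = k) : selF S k ∈ S ∧ (selF S k).1 = k := by
  rw [selF, dif_pos h]
  exact ⟨h.choose_spec.1, h.choose_spec.2⟩

lemma sel_exists {S : Finset (Fin n × Fin n × Fin n)} (hS : IsAdmissible n S) {k : Fin n}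
    (hk : Even k.val) : ∃ v ∈ S, v.1 = k := by
  have h := hS.2.1 k hk
  rw [Finset.card_eq_one] at h
  obtain ⟨a, ha⟩ := h
  have ha' : a ∈ S.filter (fun v => v.1 = k) := ha ▸ Finset.mem_singleton_self a
  exact ⟨a, (Finset.mem_filter.mp ha').1, (Finset.mem_filter.mp ha').2⟩

lemma selF_unique {S : Finset (Fin n × Fin n × Fin n)} (hS : IsAdmissible n S) {k : Fin n}
    (hk : Even k.val) {v} (hv : v ∈ S) (hvk : v.1 = k) : v = selF S k := by
  have hs := selF_spec (sel_exists hS hk)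
  exact Finset.card_le_one.mp (le_of_eq (hS.2.1 k hk)) v
    (Finset.mem_filter.mpr ⟨hv, hvk⟩) _ (Finset.mem_filter.mpr ⟨hs.1, hs.2⟩)

noncomputable def pathOf (S : Finset (Fin n × Fin n × Fin n)) : Fin n → Fin n := fun j =>
  if hj : j.val = n - 1 then 0
  else if he : Even (j.val + 1) then
    (selF S ⟨j.val + 1, by have := j.isLt; omega⟩).2.1
  else (selF S j).2.2

lemma pathOf_last (S : Finset (Fin n × Fin n × Fin n)) : pathOf S (lastIdx n) = 0 := by
  rw [pathOf, dif_pos]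
  rfl

end Admissible

section Key

variable {n m : ℕ} [NeZero n]

lemma edge_pathOf (hm : 0 < m) (hn : n = 2*m) {S : Finset (Fin n × Fin n × Fin n)}
    (hS : IsAdmissible n S) {k : Fin n} (hk : Even k.val) :
    edgeF n (pathOf S) k = selF S k := by
  obtain ⟨kv, hlt⟩ := k
  have hsel := selF_spec (sel_exists hS hk)
  have hkv : kv % 2 = 0 := Nat.even_iff.mp hk
  refine Prod.ext ?_ (Prod.ext ?_ ?_)
  · rw [edgeF_fst, hsel.2]
  · -- rows
    rcases Nat.eq_zero_or_pos kv with h0 | h0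
    · subst h0
      rw [edgeF_row0]
      have h00 : (selF S (⟨0, hlt⟩ : Fin n)).2.1.val = 0 :=
        hS.2.2 _ hsel.1 (by rw [hsel.2])
      exact (Fin.ext (by rw [h00]; simp)).symm
    · rw [edgeF_row _ kv hlt h0, pathOf, dif_neg (by show kv - 1 ≠ n - 1; omega),
        dif_pos (by show Even (kv - 1 + 1); rw [Nat.even_iff]; omega)]
      have hab : ∀ (A B : Fin n), A = B → (selF S A).2.1 = (selF S B).2.1 :=
        fun A B h => by rw [h]
      refine hab _ _ (Fin.ext ?_)
      show kv - 1 + 1 = kv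
      omega
  · -- cols
    rw [edgeF_col, pathOf, dif_neg (by show kv ≠ n - 1; omega),
      dif_neg (by show ¬ Even (kv + 1); rw [Nat.even_iff]; omega)]

lemma path_eq_pathOf (hm : 0 < m) (hn : n = 2*m) {S : Finset (Fin n × Fin n × Fin n)}
    (hS : IsAdmissible n S) {p : Fin n → Fin n}
    (hlast : p (lastIdx n) = 0)
    (hedge : ∀ k : Fin n, Even k.val → edgeF n p k = selF S k) :
    p = pathOf S := by
  funext j
  obtain ⟨jv, hj⟩ := j
  by_cases h1 : jv = n - 1
  · have hl : (⟨jv, hj⟩ : Fin n) = lastIdx n := Fin.ext h1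
    rw [hl, hlast, pathOf_last]
  · by_cases h2 : Even (jv + 1)
    · have hlt : jv + 1 < n := by omega
      have hptj := congrArg (fun v => v.2.1) (hedge ⟨jv+1, hlt⟩ h2)
      rw [edgeF_row _ (jv+1) hlt (by omega)] at hptj
      have hfix : (⟨jv + 1 - 1, by omega⟩ : Fin n) = ⟨jv, hj⟩ :=
        Fin.ext (by show jv + 1 - 1 = jv; omega)
      rw [hfix] at hptj
      rw [hptj, pathOf, dif_neg (by show jv ≠ n - 1; exact h1), dif_pos h2]
    · have hje : Even jv := by
        rw [Nat.even_iff] at h2 ⊢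
        omega
      have hptj := congrArg (fun v => v.2.2) (hedge ⟨jv, hj⟩ hje)
      rw [edgeF_col] at hptj
      rw [hptj, pathOf, dif_neg (by show jv ≠ n - 1; exact h1), dif_neg h2]

lemma path_eq_of_odd_edges (hm : 0 < m) (hn : n = 2*m) {p p' : Fin n → Fin n}
    (hodd : ∀ k : Fin n, Odd k.val → edgeF n p k = edgeF n p' k) : p = p' := by
  funext j
  obtain ⟨jv, hj⟩ := j
  by_cases h2 : Odd jv
  · have h := congrArg (fun v => v.2.2) (hodd ⟨jv, hj⟩ h2)
    rw [edgeF_col, edgeF_col] at h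
    exact h
  · have hlt : jv + 1 < n := by
      rw [Nat.odd_iff] at h2
      omega
    have ho : Odd ((⟨jv+1, hlt⟩ : Fin n)).val := by
      rw [Nat.odd_iff] at h2 ⊢
      show (jv + 1) % 2 = 1
      omega
    have h := congrArg (fun v => v.2.1) (hodd ⟨jv+1, hlt⟩ ho)
    rw [edgeF_row _ (jv+1) hlt (by omega), edgeF_row _ (jv+1) hlt (by omega)] at h
    have hfix : (⟨jv + 1 - 1, by omega⟩ : Fin n) = ⟨jv, hj⟩ :=
      Fin.ext (by show jv + 1 - 1 = jv; omega)
    rw [hfix] at h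
    exact h

lemma edges_of_subset {S : Finset (Fin n × Fin n × Fin n)} (hS : IsAdmissible n S)
    {p : Fin n → Fin n} (hsub : S ⊆ (pathD n p).support)
    {k : Fin n} (hk : Even k.val) : edgeF n p k = selF S k := by
  have hsel := selF_spec (sel_exists hS hk)
  have hmem : selF S k ∈ Finset.univ.image (edgeF n p) := by
    rw [← pathD_support]
    exact hsub hsel.1
  obtain ⟨k', -, hk'⟩ := Finset.mem_image.mp hmem
  have : k' = k := by
    have := congrArg Prod.fst hk'
    rw [edgeF_fst] at this
    rw [this, hsel.2]
  rw [this] at hk'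
  exact hk'

lemma admissible_eq_image (hm : 0 < m) (hn : n = 2*m) {S : Finset (Fin n × Fin n × Fin n)}
    (hS : IsAdmissible n S) : S = (evens n).image (edgeF n (pathOf S)) := by
  apply Finset.Subset.antisymm
  · intro v hv
    have hv1 : Even v.1.val := hS.1 v hv
    rw [Finset.mem_image]
    exact ⟨v.1, by simp [evens, hv1], by rw [edge_pathOf hm hn hS hv1,
      ← selF_unique hS hv1 hv rfl]⟩
  · intro v hv
    obtain ⟨k, hk, rfl⟩ := Finset.mem_image.mp hv
    have hke : Even k.val := by simpa [evens] using hk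
    rw [edge_pathOf hm hn hS hke]
    exact (selF_spec (sel_exists hS hke)).1

lemma subset_support_pathOf (hm : 0 < m) (hn : n = 2*m) {S : Finset (Fin n × Fin n × Fin n)}
    (hS : IsAdmissible n S) : S ⊆ (pathD n (pathOf S)).support := by
  rw [pathD_support]
  intro v hv
  have hv1 : Even v.1.val := hS.1 v hv
  rw [Finset.mem_image]
  exact ⟨v.1, Finset.mem_univ _, by rw [edge_pathOf hm hn hS hv1,
    ← selF_unique hS hv1 hv rfl]⟩

end Key

section Deriv

variable {n m : ℕ} [NeZero n]

lemma pathD_split (hn : n = 2*m) (p : Fin n → Fin n) :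
    pathD n p = (∑ k ∈ evens n, Finsupp.single (edgeF n p k) 1)
      + ∑ k ∈ odds n, Finsupp.single (edgeF n p k) 1 := by
  rw [pathD, ← Finset.sum_filter_add_sum_filter_not Finset.univ (fun k : Fin n => Even k.val)]
  congr 1
  apply Finset.sum_congr _ (fun _ _ => rfl)
  apply Finset.filter_congr
  intro k _
  simp [Nat.odd_iff, Nat.even_iff]

lemma deriv_admissible (hm : 0 < m) (hn : n = 2*m) (K : Type*) [CommSemiring K]
    {S : Finset (Fin n × Fin n × Fin n)} (hS : IsAdmissible n S) :
    pderivFinset S (IMM n K) =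
      monomial (∑ k ∈ odds n, Finsupp.single (edgeF n (pathOf S) k) 1) 1 := by
  classical
  rw [pderivFinset, IMM_eq K, pderivList_sum]
  have step1 : ∀ p : Fin n → Fin n,
      S.toList.foldr (fun v g => pderiv v g)
        (if p (lastIdx n) = 0 then monomial (pathD n p) (1:K) else 0)
      = if p (lastIdx n) = 0 ∧ S ⊆ (pathD n p).support
        then monomial (pathD n p - ∑ v ∈ S, Finsupp.single v 1) 1 else 0 := by
    intro p
    by_cases h : p (lastIdx n) = 0
    · rw [if_pos h, pderivList_monomial _ S.nodup_toList _ (pathD_le p),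
        Finset.toList_toFinset]
      by_cases h2 : S ⊆ (pathD n p).support
      · rw [if_pos h2, if_pos ⟨h, h2⟩]
      · rw [if_neg h2, if_neg (fun hc => h2 hc.2)]
    · rw [if_neg h, if_neg (fun hc => h hc.1)]
      simpa using pderivList_sum S.toList (∅ : Finset ℕ)
        (fun _ => (0 : MvPolynomial (Fin n × Fin n × Fin n) K))
  rw [Finset.sum_congr rfl (fun p _ => step1 p),
    Fintype.sum_eq_single (pathOf S) (fun p hp => ?_), if_pos
      ⟨pathOf_last S, subset_support_pathOf hm hn hS⟩]
  · congr 1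
    have hsum : (∑ v ∈ S, Finsupp.single v (1:ℕ))
        = ∑ k ∈ evens n, Finsupp.single (edgeF n (pathOf S) k) 1 := by
      conv_lhs => rw [admissible_eq_image hm hn hS]
      exact Finset.sum_image (fun a _ b _ h => edgeF_injective n (pathOf S) h)
    rw [hsum, pathD_split hn, add_tsub_cancel_left]
  · rw [if_neg]
    rintro ⟨h1, h2⟩
    exact hp (path_eq_pathOf hm hn hS h1 (fun k hk => edges_of_subset hS h2 hk))

end Deriv

section Count

variable {n m : ℕ} [NeZero n]

lemma image_admissible (p : Fin n → Fin n) :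
    IsAdmissible n ((evens n).image (edgeF n p)) := by
  refine ⟨?_, ?_, ?_⟩
  · intro v hv
    obtain ⟨k, hk, rfl⟩ := Finset.mem_image.mp hv
    rw [edgeF_fst]
    simpa [evens] using hk
  · intro k hk
    rw [filter_image_edge _ _ k (by simp [evens, hk]), Finset.card_singleton]
  · intro v hv h0
    obtain ⟨k, hk, rfl⟩ := Finset.mem_image.mp hv
    rw [edgeF_fst] at h0
    have hpos : 0 < n := Nat.pos_of_ne_zero (NeZero.ne n)
    have hk0 : k = ⟨0, hpos⟩ := Fin.ext h0
    rw [hk0, edgeF_row0 p hpos]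
    rfl

end Count


/-- For `n = 2m`, the derivative of `IMM_{n,n}` with respect to an admissible set `S` is
a single multilinear monomial `m_S` (with coefficient `1`) of degree `m` containing
exactly one variable from each even-indexed (`1`-based, i.e. odd `0`-based) matrix;
moreover `S ↦ m_S` is injective on admissible sets, and the number of admissible sets is
`n^(2m−1) = n^(n−1)`. -/
theorem pderiv_IMM_admissible
    (m : ℕ) (hm : 0 < m) (K : Type*) [Field K] (n : ℕ) (hn : n = 2 * m) :
    (∀ S : Finset (Fin n × Fin n × Fin n), IsAdmissible n S →
      ∃ V : Finset (Fin n × Fin n × Fin n),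
        pderivFinset S (IMM n K) = ∏ v ∈ V, X v ∧ V.card = m ∧
        (∀ k : Fin n, Odd k.val → (V.filter fun v => v.1 = k).card = 1)) ∧
    (∀ S S' : Finset (Fin n × Fin n × Fin n), IsAdmissible n S → IsAdmissible n S' →
      pderivFinset S (IMM n K) = pderivFinset S' (IMM n K) → S = S') ∧
    {S : Finset (Fin n × Fin n × Fin n) | IsAdmissible n S}.ncard = n ^ (2 * m - 1) := by
  haveI : NeZero n := ⟨by omega⟩
  refine ⟨?_, ?_, ?_⟩
  · intro S hS
    refine ⟨(odds n).image (edgeF n (pathOf S)), ?_, ?_, ?_⟩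
    · rw [deriv_admissible hm hn K hS, prodX_eq_monomial,
        Finset.sum_image (fun a _ b _ h => edgeF_injective n (pathOf S) h)]
    · rw [Finset.card_image_of_injective _ (edgeF_injective n (pathOf S)), card_odds hn]
    · intro k hk
      rw [filter_image_edge _ _ k (by simp [odds, hk]), Finset.card_singleton]
  · intro S S' hS hS' hder
    rw [deriv_admissible hm hn K hS, deriv_admissible hm hn K hS'] at hder
    have hd := monomial_left_injective (one_ne_zero (α := K)) hder
    have hsupp := congrArg Finsupp.support hd
    rw [sum_single_support _ _ (edgeF_injective n (pathOf S)),
      sum_single_support _ _ (edgeF_injective n (pathOf S'))] at hsupp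
    have hodd : ∀ k : Fin n, Odd k.val → edgeF n (pathOf S) k = edgeF n (pathOf S') k := by
      intro k hk
      have hmem : edgeF n (pathOf S) k ∈ (odds n).image (edgeF n (pathOf S')) := by
        rw [← hsupp]
        exact Finset.mem_image_of_mem _ (by simp [odds, hk])
      obtain ⟨k', -, hk'⟩ := Finset.mem_image.mp hmem
      have hkk : k' = k := by
        have h5 := congrArg Prod.fst hk'
        rw [edgeF_fst, edgeF_fst] at h5
        exact h5
      rw [hkk] at hk'
      exact hk'.symm
    have hp : pathOf S = pathOf S' := path_eq_of_odd_edges hm hn hodd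
    rw [admissible_eq_image hm hn hS, admissible_eq_image hm hn hS', hp]
  · have e : {p : Fin n → Fin n // p (lastIdx n) = 0} ≃
        {S : Finset (Fin n × Fin n × Fin n) | IsAdmissible n S} :=
      { toFun := fun p => ⟨(evens n).image (edgeF n p.1), image_admissible p.1⟩
        invFun := fun S => ⟨pathOf S.1, pathOf_last S.1⟩
        left_inv := fun p => by
          apply Subtype.ext
          exact (path_eq_pathOf hm hn (image_admissible p.1) p.2 (fun k hk =>
            (selF_unique (image_admissible p.1) hk
              (Finset.mem_image_of_mem _ (by simp [evens, hk])) rfl))).symm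
        right_inv := fun S => Subtype.ext (admissible_eq_image hm hn S.2).symm }
    have e2 : {p : Fin n → Fin n // p (lastIdx n) = 0} ≃
        ({j : Fin n // j ≠ lastIdx n} → Fin n) :=
      { toFun := fun p j => p.1 j.1
        invFun := fun g => ⟨fun j => if h : j = lastIdx n then 0 else g ⟨j, h⟩, by simp⟩
        left_inv := fun p => by
          apply Subtype.ext
          funext j
          dsimp only
          split
          · next h => rw [h, p.2]
          · rfl
        right_inv := fun g => by
          funext j
          dsimp only
          rw [dif_neg j.2] }
    rw [← Nat.card_coe_set_eq, Nat.card_congr (e.symm.trans e2),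
      Nat.card_eq_fintype_card, Fintype.card_fun]
    have hc : Fintype.card {j : Fin n // j ≠ lastIdx n} = n - 1 := by
      rw [Fintype.card_subtype_compl, Fintype.card_subtype_eq, Fintype.card_fin]
    rw [hc, Fintype.card_fin, show n - 1 = 2 * m - 1 from by omega]
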